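/- Conjugation distorts hyperbolicity boundedly. Let ψ ∈ SO⁰(2,1), let s = d(O, ψ(O)) be the hyperbolic distance that ψ moves the point O ∈ H², and set K = e^s π/2. Then for every ε > 0 and every hyperbolic g ∈ SO⁰(2,1): if ψ g ψ⁻¹ is ε-hyperbolic, then g is (ε/K)-hyperbolic. -/

import Mathlib

noncomputable section

open Set

/-- The underlying vector space ℝ^{2,1} of Minkowski (2+1)-space `E`. -/
abbrev V : Type := Fin 3 → ℝ

/-- The Lorentzian inner product `B` of signature (2,1). -/
def mB (u v : V) : ℝ := u 0 * v 0 + u 1 * v 1 - u 2 * v 2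

def Timelike (v : V) : Prop := mB v v < 0

def UnitSpacelike (v : V) : Prop := mB v v = 1

/-- future-pointing timelike vector. -/
def FutureTimelike (v : V) : Prop := mB v v < 0 ∧ 0 < v 2

/-- The standard Euclidean norm on ℝ³. -/
def eunorm (v : V) : ℝ := Real.sqrt (v 0 ^ 2 + v 1 ^ 2 + v 2 ^ 2)

/-- The Euclidean distance ρ. -/
def ρ (p q : V) : ℝ := eunorm (p - q)

/-- Open Euclidean ball `B(x,δ)`. -/
def eball (x : V) (δ : ℝ) : Set V := {y | ρ x y < δ}

/-- Euclidean δ-neighborhood `B(S,δ)` of a set `S`. -/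
def nbhd (S : Set V) (δ : ℝ) : Set V := {y | ∃ x ∈ S, ρ x y < δ}

/-- Membership in SO⁰(2,1): a linear isometry of `B` preserving orientation
(det = 1) and time-orientation (the future cone); this characterizes the
identity component of the group of linear isometries of `B`. -/
def InSO (g : V ≃ₗ[ℝ] V) : Prop :=
  (∀ u v : V, mB (g u) (g v) = mB u v) ∧
  LinearMap.det g.toLinearMap = 1 ∧
  ∀ v : V, FutureTimelike v → FutureTimelike (g v)

/-- Membership in Isom⁰(E) = SO⁰(2,1) ⋉ ℝ³. -/
def InIsom (φ : V ≃ᵃ[ℝ] V) : Prop := InSO φ.linear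

/-- The point `u_φ = (cos φ, sin φ, 1)` on the circle S¹ of future-pointing null vectors. -/
def uph (φ : ℝ) : V := ![Real.cos φ, Real.sin φ, 1]

/-- The circle S¹ of future-pointing null vectors. -/
def circ : Set V := {u | ∃ φ : ℝ, u = uph φ}

/-- An interval (arc) `{u_φ : φ₁ < φ < φ₂}` on S¹. -/
def arc (φ₁ φ₂ : ℝ) : Set V := {u | ∃ φ : ℝ, φ₁ < φ ∧ φ < φ₂ ∧ u = uph φ}

/-- Radial projection of a future-pointing null vector back onto S¹ (divide by third
coordinate); `u ↦ nproj (g u)` is the induced action `P(g)` of `g` on S¹. -/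
def nproj (w : V) : V := (w 2)⁻¹ • w

/-- `(a,b,c)` is a positively oriented basis of ℝ³. -/
def PosOriented (a b c : V) : Prop := 0 < Matrix.det (Matrix.of ![a, b, c])

/-- `xm = x⁻(v)`, `xp = x⁺(v)`: the two points of S¹ which are B-orthogonal to the
unit-spacelike vector `v`, labeled so that `(x⁻(v), x⁺(v), v)` is positively oriented. -/
def IsNullFrame (v xm xp : V) : Prop :=
  xm ∈ circ ∧ xp ∈ circ ∧ mB xm v = 0 ∧ mB xp v = 0 ∧ xm ≠ xp ∧ PosOriented xm xp v

/-- Eigendata of a hyperbolic element of SO⁰(2,1): `xm = x⁻(g)` and `xp = x⁺(g)` are the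
eigenvectors on S¹ with eigenvalues `lam < 1 < lam⁻¹`. -/
def IsHypData (g : V ≃ₗ[ℝ] V) (lam : ℝ) (xm xp : V) : Prop :=
  0 < lam ∧ lam < 1 ∧ xm ∈ circ ∧ xp ∈ circ ∧ g xm = lam • xm ∧ g xp = lam⁻¹ • xp

/-- `g` is hyperbolic: it has eigenvalues `lam < 1 < lam⁻¹` with null eigenvectors on S¹. -/
def IsHyperbolic (g : V ≃ₗ[ℝ] V) : Prop := ∃ lam xm xp, IsHypData g lam xm xp

/-- `g` is ε-hyperbolic: it is hyperbolic and `ρ(x⁺(g), x⁻(g)) ≥ ε`. -/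
def EpsHyperbolic (g : V ≃ₗ[ℝ] V) (ε : ℝ) : Prop :=
  ∃ lam xm xp, IsHypData g lam xm xp ∧ ε ≤ ρ xp xm

/-- Hyperbolic 2-space H² (hyperboloid model: the set of future unit timelike vectors,
the canonical section of the set of timelike lines). -/
def Hyp : Set V := {v | mB v v = -1 ∧ 0 < v 2}

/-- The origin `O ∈ H²`. -/
def Opt : V := ![0, 0, 1]

/-- Hyperbolic distance on H² (arcosh of |B(x,y)| for normalized x, y). -/
def hdist (x y : V) : ℝ := Real.log (|mB x y| + Real.sqrt (mB x y ^ 2 - 1))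

/-- The half-plane `H_v ⊂ H²` determined by a unit-spacelike vector `v`. -/
def halfPlane (v : V) : Set V := {u | u ∈ Hyp ∧ 0 < mB u v}

/-- The geodesic `l_v ⊂ H²` determined by a unit-spacelike vector `v`. -/
def geo (v : V) : Set V := {u | u ∈ Hyp ∧ mB u v = 0}

/-- The crooked plane `C₀` with vertex the origin directed by `e₁ = (1,0,0)`. -/
def C0 : Set V :=
  {u | u 0 = 0 ∧ |u 1| ≤ |u 2|} ∪
  {u | u 0 ≤ 0 ∧ u 1 = u 2} ∪
  {u | 0 ≤ u 0 ∧ u 1 = -u 2}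

/-- The open crooked half-space `H₀` bounded by `C₀`. -/
def H0 : Set V :=
  {u | 0 < u 0 ∧ 0 < u 1 + u 2} ∪
  {u | u 0 = 0 ∧ 0 < u 1 + u 2 ∧ 0 < u 2 - u 1} ∪
  {u | u 0 < 0 ∧ 0 < u 2 - u 1}

/-- `S` is a crooked plane `C(u,p) = p + g(C₀)` for some `g ∈ SO⁰(2,1)`. -/
def IsCrookedPlane (S : Set V) : Prop :=
  ∃ (g : V ≃ₗ[ℝ] V) (p : V), InSO g ∧ S = (fun x => p + g x) '' C0

/-- `H` is a crooked half-space `H(u,p) = p + g(H₀)` for some `g ∈ SO⁰(2,1)`. -/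
def IsCrookedHalfSpace (H : Set V) : Prop :=
  ∃ (g : V ≃ₗ[ℝ] V) (p : V), InSO g ∧ H = (fun x => p + g x) '' H0

/-- Signed generator: `g^+ = g`, `g^- = g⁻¹` (Bool `true` = `+`, `false` = `−`). -/
def sgen {G : Type*} [Group G] (g : G) (j : Bool) : G := if j then g else g⁻¹

/-- A word `w 0, …, w l` in the letters `(i,j)` (meaning `h_i^j`) is reduced:
`(i_{k+1}, j_{k+1}) ≠ (i_k, −j_k)` for all `k < l`. -/
def ReducedWord {m : ℕ} (l : ℕ) (w : ℕ → Fin m × Bool) : Prop :=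
  ∀ k, k < l → ¬((w (k + 1)).1 = (w k).1 ∧ (w (k + 1)).2 = !(w k).2)

/-- An affine Schottky configuration. -/
structure AffSchottky (m : ℕ) where
  hm : 2 ≤ m
  h : Fin m → V ≃ᵃ[ℝ] V
  hIsom : ∀ i, InIsom (h i)
  H : Fin m → Bool → Set V
  hCrooked : ∀ i j, IsCrookedHalfSpace (H i j)
  hDisj : ∀ i j i' j', (i, j) ≠ (i', j') → Disjoint (H i j) (H i' j')
  hPair : ∀ i, ⇑(h i) '' H i false = (closure (H i true))ᶜ

namespace AffSchottky

variable {m : ℕ} (S : AffSchottky m)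

/-- The crooked polyhedron `X = E − ⋃ closure(H_i^j)`. -/
def X : Set V := (⋃ i, ⋃ j, closure (S.H i j))ᶜ

/-- The affine Schottky group Γ generated by `h₁, …, h_m`. -/
def Γ : Subgroup (V ≃ᵃ[ℝ] V) := Subgroup.closure (Set.range S.h)

/-- The signed generators `h_i^j`. -/
def hp (i : Fin m) (j : Bool) : V ≃ᵃ[ℝ] V := sgen (S.h i) j

/-- `wprod w k = h_{i₀}^{j₀} ⋯ h_{i_{k-1}}^{j_{k-1}}` where `w t = (i_t, j_t)`. -/
def wprod (w : ℕ → Fin m × Bool) (k : ℕ) : V ≃ᵃ[ℝ] V :=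
  ((List.range k).map fun t => S.hp (w t).1 (w t).2).prod

end AffSchottky

/-- A (linear) Schottky configuration. -/
structure LinSchottky (m : ℕ) where
  hm : 2 ≤ m
  g : Fin m → V ≃ₗ[ℝ] V
  hSO : ∀ i, InSO (g i)
  a : Fin m → Bool → ℝ
  b : Fin m → Bool → ℝ
  hab : ∀ i j, a i j < b i j ∧ b i j - a i j < 2 * Real.pi
  hDisjCl : ∀ i j i' j', (i, j) ≠ (i', j') →
    Disjoint (closure (arc (a i j) (b i j))) (closure (arc (a i' j') (b i' j')))
  hPair : ∀ i, (fun u => nproj (g i u)) '' arc (a i false) (b i false) =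
    circ \ closure (arc (a i true) (b i true))
  hPairInv : ∀ i, (fun u => nproj ((g i)⁻¹ u)) '' arc (a i true) (b i true) =
    circ \ closure (arc (a i false) (b i false))

namespace LinSchottky

variable {m : ℕ} (S : LinSchottky m)

/-- The intervals `A_i^j ⊂ S¹`. -/
def A (i : Fin m) (j : Bool) : Set V := arc (S.a i j) (S.b i j)

/-- The Schottky group `G` generated by `g₁, …, g_m`. -/
def G : Subgroup (V ≃ₗ[ℝ] V) := Subgroup.closure (Set.range S.g)

/-- The signed generators `g_i^j`. -/
def gp (i : Fin m) (j : Bool) : V ≃ₗ[ℝ] V := sgen (S.g i) j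

/-- `wprod w k = g_{i₀}^{j₀} ⋯ g_{i_{k-1}}^{j_{k-1}}` where `w t = (i_t, j_t)`. -/
def wprod (w : ℕ → Fin m × Bool) (k : ℕ) : V ≃ₗ[ℝ] V :=
  ((List.range k).map fun t => S.gp (w t).1 (w t).2).prod

end LinSchottky

/-- Given directing unit-spacelike vectors `v i j` of the half-planes `H_i^j`, the
fundamental polygon `Δ = H² − ⋃ closure(H_i^j)` (closures taken in H²). -/
def linΔ {m : ℕ} (v : Fin m → Bool → V) : Set V :=
  Hyp \ ⋃ i, ⋃ j, Hyp ∩ closure (halfPlane (v i j))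


private lemma mB_smul (a b : ℝ) (u v : V) : mB (a • u) (b • v) = a * b * mB u v := by
  simp only [mB, Pi.smul_apply, smul_eq_mul]; ring

private lemma rho_nonneg (p q : V) : 0 ≤ ρ p q := Real.sqrt_nonneg _

private lemma rho_sq_circ (α β : ℝ) :
    ρ (uph α) (uph β) ^ 2 = -2 * mB (uph α) (uph β) := by
  have h0 : (0:ℝ) ≤ ((uph α - uph β) 0) ^ 2 + ((uph α - uph β) 1) ^ 2 + ((uph α - uph β) 2) ^ 2 := by
    positivity
  unfold ρ eunorm
  rw [Real.sq_sqrt h0]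
  simp only [uph, mB, Pi.sub_apply, Matrix.cons_val_zero, Matrix.cons_val_one, Matrix.head_cons,
    Matrix.cons_val_two, Matrix.tail_cons]
  linear_combination Real.sin_sq_add_cos_sq α + Real.sin_sq_add_cos_sq β

private lemma circ_of (x : V) (h1 : x 0 ^ 2 + x 1 ^ 2 = 1) (h2 : x 2 = 1) : x ∈ circ := by
  have hz : (⟨x 0, x 1⟩ : ℂ) ≠ 0 := by
    intro h
    rw [Complex.ext_iff] at h
    simp only [Complex.zero_re, Complex.zero_im] at h
    rw [h.1, h.2] at h1; norm_num at h1
  have habs : ‖(⟨x 0, x 1⟩ : ℂ)‖ = 1 := by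
    rw [Complex.norm_def, Complex.normSq_mk,
      show x 0 * x 0 + x 1 * x 1 = 1 by nlinarith]
    exact Real.sqrt_one
  have hcos : Real.cos (Complex.arg ⟨x 0, x 1⟩) = x 0 := by
    rw [Complex.cos_arg hz, habs]; simp
  have hsin : Real.sin (Complex.arg ⟨x 0, x 1⟩) = x 1 := by
    rw [Complex.sin_arg ⟨x 0, x 1⟩, habs]; simp
  refine ⟨Complex.arg ⟨x 0, x 1⟩, ?_⟩
  funext i; fin_cases i
  · simp [uph, hcos]
  · simp [uph, hsin]
  · simpa [uph] using h2

private lemma key_lemma (ψ : V ≃ₗ[ℝ] V) (hψ : InSO ψ) (y : V) (hy : y ∈ circ) :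
    ∃ (c : ℝ) (x : V), 0 < c ∧ c ≤ Real.exp (hdist Opt (ψ Opt)) ∧ x ∈ circ ∧
      ψ.symm y = c • x := by
  obtain ⟨φ, rfl⟩ := hy
  set p := ψ Opt with hpdef
  have hOptFT : FutureTimelike Opt := by constructor <;> norm_num [mB, Opt, Matrix.cons_val_two, Matrix.tail_cons, Matrix.head_cons]
  have hp2 : 0 < p 2 := (hψ.2.2 Opt hOptFT).2
  have hpp : mB p p = -1 := by rw [hψ.1 Opt Opt]; norm_num [mB, Opt, Matrix.cons_val_two, Matrix.tail_cons, Matrix.head_cons]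
  have hq : p 0 ^ 2 + p 1 ^ 2 = p 2 ^ 2 - 1 := by
    simp only [mB] at hpp; nlinarith [hpp]
  have hr0 : (0:ℝ) ≤ p 2 ^ 2 - 1 := by nlinarith [sq_nonneg (p 0), sq_nonneg (p 1)]
  set r := Real.sqrt (p 2 ^ 2 - 1) with hrdef
  have hrnn : 0 ≤ r := Real.sqrt_nonneg _
  have hrlt : r < p 2 := by
    rw [hrdef]; exact (Real.sqrt_lt' hp2).2 (by nlinarith)
  set w := ψ.symm (uph φ) with hwdef
  have hψw : ψ w = uph φ := ψ.apply_symm_apply _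
  set t := p 0 * Real.cos φ + p 1 * Real.sin φ with htdef
  have hc : w 2 = p 2 - t := by
    have h1 : mB (ψ w) (ψ Opt) = mB w Opt := hψ.1 w Opt
    rw [hψw] at h1
    have h2 : mB w Opt = -(w 2) := by simp [mB, Opt]
    have h3 : mB (uph φ) p = t - p 2 := by simp [mB, uph, htdef]; ring
    rw [h2, h3] at h1; linarith
  have hts : t ^ 2 ≤ p 2 ^ 2 - 1 := by
    have hid : (p 0 * Real.sin φ - p 1 * Real.cos φ) ^ 2 + t ^ 2
        = (p 0 ^ 2 + p 1 ^ 2) * (Real.sin φ ^ 2 + Real.cos φ ^ 2) := by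
      rw [htdef]; ring
    rw [Real.sin_sq_add_cos_sq, mul_one, hq] at hid
    nlinarith [sq_nonneg (p 0 * Real.sin φ - p 1 * Real.cos φ)]
  have htr : |t| ≤ r := by
    rw [← Real.sqrt_sq_eq_abs, hrdef]; exact Real.sqrt_le_sqrt hts
  obtain ⟨htr1, htr2⟩ := abs_le.1 htr
  have hc0 : 0 < w 2 := by rw [hc]; linarith
  have hexp : Real.exp (hdist Opt p) = p 2 + r := by
    have hOp : mB Opt p = -(p 2) := by simp [mB, Opt]
    rw [hdist, hOp, abs_neg, abs_of_pos hp2, neg_sq, Real.exp_log (by linarith)]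
  have hcE : w 2 ≤ Real.exp (hdist Opt p) := by rw [hexp, hc]; linarith
  have hww : mB w w = 0 := by
    have h1 : mB (ψ w) (ψ w) = mB w w := hψ.1 w w
    rw [hψw] at h1
    have h2 : mB (uph φ) (uph φ) = 0 := by
      simp only [mB, uph, Matrix.cons_val_zero, Matrix.cons_val_one, Matrix.head_cons,
        Matrix.cons_val_two, Matrix.tail_cons]
      linear_combination Real.sin_sq_add_cos_sq φ
    linarith [h1, h2]
  refine ⟨w 2, (w 2)⁻¹ • w, hc0, hcE, ?_, ?_⟩
  · apply circ_of
    · have h3 : w 0 ^ 2 + w 1 ^ 2 = w 2 ^ 2 := by simp only [mB] at hww; nlinarith [hww]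
      have : ((w 2)⁻¹ • w) 0 ^ 2 + ((w 2)⁻¹ • w) 1 ^ 2 = (w 2)⁻¹ ^ 2 * (w 0 ^ 2 + w 1 ^ 2) := by
        simp only [Pi.smul_apply, smul_eq_mul]; ring
      rw [this, h3]
      field_simp
    · simp only [Pi.smul_apply, smul_eq_mul]
      exact inv_mul_cancel₀ (ne_of_gt hc0)
  · rw [smul_smul, mul_inv_cancel₀ (ne_of_gt hc0), one_smul]

/-- conjugation distorts hyperbolicity boundedly. Let `ψ ∈ SO⁰(2,1)`,
`s = d(O, ψ(O))` and `K = e^s π/2`. If `ψ g ψ⁻¹` is ε-hyperbolic, then `g` is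
(ε/K)-hyperbolic. -/
theorem stmt14 (ψ : V ≃ₗ[ℝ] V) (hψ : InSO ψ) (ε : ℝ) (hε : 0 < ε)
    (g : V ≃ₗ[ℝ] V) (hg : IsHyperbolic g)
    (hconj : EpsHyperbolic (ψ * g * ψ⁻¹) ε) :
    EpsHyperbolic g (ε / (Real.exp (hdist Opt (ψ Opt)) * Real.pi / 2)) := by
  obtain ⟨lam, ym, yp, ⟨hl0, hl1, hymc, hypc, heym, heyp⟩, hρy⟩ := hconj
  obtain ⟨cm, xm, hcm0, hcmE, hxmc, hwm⟩ := key_lemma ψ hψ ym hymc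
  obtain ⟨cp, xp, hcp0, hcpE, hxpc, hwp⟩ := key_lemma ψ hψ yp hypc
  set E := Real.exp (hdist Opt (ψ Opt)) with hE
  have hE0 : 0 < E := Real.exp_pos _
  have htransfer : ∀ (μ : ℝ) (c : ℝ) (y x : V), 0 < c → ψ.symm y = c • x →
      (ψ * g * ψ⁻¹) y = μ • y → g x = μ • x := by
    intro μ c y x hcpos hsy hey
    have h1 : ψ (g (ψ.symm y)) = μ • y := hey
    have h2 : g (ψ.symm y) = μ • ψ.symm y := by
      have := congrArg ψ.symm h1
      simpa [map_smul] using this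
    rw [hsy, map_smul, smul_comm μ c x] at h2
    exact smul_right_injective V (ne_of_gt hcpos) h2
  have hgm : g xm = lam • xm := htransfer lam cm ym xm hcm0 hwm heym
  have hgp : g xp = lam⁻¹ • xp := htransfer lam⁻¹ cp yp xp hcp0 hwp heyp
  have hmBy : mB yp ym = cp * cm * mB xp xm := by
    have h1 : mB (ψ (ψ.symm yp)) (ψ (ψ.symm ym)) = mB (ψ.symm yp) (ψ.symm ym) := hψ.1 _ _
    rw [ψ.apply_symm_apply, ψ.apply_symm_apply, hwp, hwm, mB_smul] at h1
    exact h1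
  obtain ⟨a, ha⟩ := hymc
  obtain ⟨b, hb⟩ := hypc
  obtain ⟨d, hd⟩ := id hxmc
  obtain ⟨e, he⟩ := id hxpc
  have e1 : ρ yp ym ^ 2 = -2 * mB yp ym := by rw [hb, ha]; exact rho_sq_circ b a
  have e2 : ρ xp xm ^ 2 = -2 * mB xp xm := by rw [he, hd]; exact rho_sq_circ e d
  have hsq : ρ yp ym ^ 2 = cp * cm * ρ xp xm ^ 2 := by rw [e1, e2, hmBy]; ring
  have hρx0 : 0 ≤ ρ xp xm := rho_nonneg _ _
  have hρy0 : 0 ≤ ρ yp ym := rho_nonneg _ _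
  have hle : ρ yp ym ≤ E * ρ xp xm := by
    have hcc : cp * cm ≤ E * E := mul_le_mul hcpE hcmE hcm0.le hE0.le
    have h1 : ρ yp ym ^ 2 ≤ (E * ρ xp xm) ^ 2 := by
      rw [hsq, mul_pow]
      calc cp * cm * ρ xp xm ^ 2 ≤ (E * E) * ρ xp xm ^ 2 :=
            mul_le_mul_of_nonneg_right hcc (sq_nonneg _)
        _ = E ^ 2 * ρ xp xm ^ 2 := by ring
    have h2 := Real.sqrt_le_sqrt h1
    rwa [Real.sqrt_sq hρy0, Real.sqrt_sq (by positivity)] at h2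
  refine ⟨lam, xm, xp, ⟨hl0, hl1, hxmc, hxpc, hgm, hgp⟩, ?_⟩
  rw [div_le_iff₀ (by positivity)]
  have h2 : ε ≤ E * ρ xp xm := le_trans hρy hle
  nlinarith [Real.pi_gt_three, mul_nonneg hρx0 hE0.le]
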